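/- Let n ≥ 2 and define S(n,α) = (∫_{α/√n}^{1}(1-t²)^{(n-3)/2} dt)/(2∫_0^1(1-t²)^{(n-3)/2} dt) for α ∈ (0,√n) and S(n,α) = 0 for α ≥ √n. Then for all α > 0, S(n,α) < e^{-0.45 α²}. -/

import Mathlib

open MeasureTheory Set intervalIntegral Real

private lemma aux_integrable13 {p : ℝ} (hp : -(1/2 : ℝ) ≤ p) :
    IntervalIntegrable (fun t : ℝ => (1 - t ^ 2) ^ p) volume 0 1 := by
  have hg : IntervalIntegrable (fun t : ℝ => (1 - t) ^ (-(1/2) : ℝ)) volume 0 1 := by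
    have := (intervalIntegrable_rpow' (a := (0:ℝ)) (b := 1) (r := -(1/2)) (by norm_num)).comp_sub_left 1
    simpa using this.symm
  apply hg.mono_fun
  · apply Measurable.aestronglyMeasurable
    exact Measurable.pow_const (measurable_const.sub (measurable_id.pow_const 2)) _
  · have hne : ∀ᵐ t : ℝ ∂(volume.restrict (Set.uIoc (0:ℝ) 1)), t ≠ 1 := by
      apply ae_restrict_of_ae
      rw [ae_iff]
      simpa using measure_singleton (1 : ℝ)
    filter_upwards [ae_restrict_mem measurableSet_uIoc, hne] with t ht htne
    rw [Set.uIoc_of_le (by norm_num : (0:ℝ) ≤ 1)] at ht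
    have ht1 : t < 1 := lt_of_le_of_ne ht.2 htne
    have hb0 : 0 < 1 - t ^ 2 := by nlinarith [ht.1]
    have hb1 : 1 - t ^ 2 ≤ 1 := by nlinarith [sq_nonneg t]
    have h1 : (1 - t ^ 2) ^ p ≤ (1 - t ^ 2) ^ (-(1/2) : ℝ) :=
      Real.rpow_le_rpow_of_exponent_ge hb0 hb1 hp
    have h2 : (1 - t ^ 2) ^ (-(1/2) : ℝ) ≤ (1 - t) ^ (-(1/2) : ℝ) := by
      apply Real.rpow_le_rpow_of_nonpos (by linarith) (by nlinarith [ht.1]) (by norm_num)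
    simp only [Real.norm_eq_abs]
    rw [abs_of_nonneg (Real.rpow_nonneg hb0.le _),
      abs_of_nonneg (Real.rpow_nonneg (by linarith : (0:ℝ) ≤ 1 - t) _)]
    linarith

private lemma aux_key13 {p a : ℝ} (hp : -(1/2 : ℝ) ≤ p) (ha : 0 < a) (ha1 : a < 1) :
    (∫ t in a..1, (1 - t ^ 2) ^ p) ≤
      (1 - a ^ 2) ^ (p + 1) * ∫ t in (0:ℝ)..1, (1 - t ^ 2) ^ p := by
  set f : ℝ → ℝ := fun t => (1 - t ^ 2) ^ p with hf
  have hc : 0 < 1 - a ^ 2 := by nlinarith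
  set φ : ℝ → ℝ := fun u => Real.sqrt (a ^ 2 + (1 - a ^ 2) * u ^ 2) with hφ
  have harg : ∀ u : ℝ, 0 < a ^ 2 + (1 - a ^ 2) * u ^ 2 := fun u => by
    have := mul_nonneg hc.le (sq_nonneg u); nlinarith [pow_pos ha 2]
  have hφpos : ∀ u : ℝ, 0 < φ u := fun u => Real.sqrt_pos.2 (harg u)
  have hφsq : ∀ u : ℝ, (φ u) ^ 2 = a ^ 2 + (1 - a ^ 2) * u ^ 2 := fun u =>
    Real.sq_sqrt (harg u).le
  have hφ0 : φ 0 = a := by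
    simp only [hφ]; norm_num; exact Real.sqrt_sq ha.le
  have hφ1 : φ 1 = 1 := by
    have : a ^ 2 + (1 - a ^ 2) * 1 ^ 2 = 1 := by ring
    simp only [hφ, this, Real.sqrt_one]
  have hmono : StrictMonoOn φ (Icc 0 1) := by
    intro x hx y hy hxy
    apply Real.sqrt_lt_sqrt (harg x).le
    have hx2 : x ^ 2 < y ^ 2 := by nlinarith [hx.1]
    nlinarith
  have hinj : InjOn φ (Ioo 0 1) := (hmono.mono Ioo_subset_Icc_self).injOn
  have hcont : Continuous φ := Real.continuous_sqrt.comp (by continuity)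
  have himg : φ '' Ioo 0 1 = Ioo a 1 := by
    apply Subset.antisymm
    · rintro t ⟨u, hu, rfl⟩
      constructor
      · rw [← hφ0]
        exact hmono (left_mem_Icc.2 zero_le_one) (Ioo_subset_Icc_self hu) hu.1
      · rw [← hφ1]
        exact hmono (Ioo_subset_Icc_self hu) (right_mem_Icc.2 zero_le_one) hu.2
    · have := intermediate_value_Ioo (zero_le_one) hcont.continuousOn
      rwa [hφ0, hφ1] at this
  have hφ' : ∀ u ∈ Ioo (0:ℝ) 1,
      HasDerivWithinAt φ ((1 - a ^ 2) * u / φ u) (Ioo 0 1) u := by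
    intro u _
    have h1 : HasDerivAt (fun y : ℝ => a ^ 2 + (1 - a ^ 2) * y ^ 2)
        ((1 - a ^ 2) * (2 * u)) u := by
      simpa using ((hasDerivAt_pow 2 u).const_mul (1 - a ^ 2)).const_add (a ^ 2)
    have h2 := (Real.hasDerivAt_sqrt (harg u).ne').comp u h1
    have heq : (1 - a ^ 2) * u / φ u
        = 1 / (2 * Real.sqrt (a ^ 2 + (1 - a ^ 2) * u ^ 2)) * ((1 - a ^ 2) * (2 * u)) := by
      rw [hφ]
      field_simp
    rw [heq]
    exact h2.hasDerivWithinAt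
  -- integrability of f on Ioo a 1
  have hfI : IntervalIntegrable f volume a 1 := by
    apply (aux_integrable13 hp).mono_set
    rw [uIcc_of_le ha1.le, uIcc_of_le zero_le_one]
    exact Icc_subset_Icc ha.le le_rfl
  have hfIoo : IntegrableOn f (Ioo a 1) :=
    ((intervalIntegrable_iff_integrableOn_Ioc_of_le ha1.le).mp hfI).mono_set Ioo_subset_Ioc_self
  have hDIoo : IntegrableOn (fun u : ℝ => (1 - u ^ 2) ^ p) (Ioo 0 1) :=
    ((intervalIntegrable_iff_integrableOn_Ioc_of_le zero_le_one).mp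
      (aux_integrable13 hp)).mono_set Ioo_subset_Ioc_self
  have hLHSint : IntegrableOn
      (fun u => |(1 - a ^ 2) * u / φ u| • f (φ u)) (Ioo 0 1) := by
    rw [← integrableOn_image_iff_integrableOn_abs_deriv_smul measurableSet_Ioo hφ' hinj f, himg]
    exact hfIoo
  have hRHSint : IntegrableOn
      (fun u : ℝ => (1 - a ^ 2) ^ (p + 1) * (1 - u ^ 2) ^ p) (Ioo 0 1) :=
    hDIoo.const_mul _
  have hpoint : ∀ u ∈ Ioo (0:ℝ) 1,
      |(1 - a ^ 2) * u / φ u| • f (φ u)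
        ≤ (1 - a ^ 2) ^ (p + 1) * (1 - u ^ 2) ^ p := by
    intro u hu
    have hu0 : 0 < u := hu.1
    have hu1 : u < 1 := hu.2
    have huphi : u ≤ φ u := by
      calc u = Real.sqrt (u ^ 2) := (Real.sqrt_sq hu0.le).symm
        _ ≤ φ u := by
            simp only [hφ]
            apply Real.sqrt_le_sqrt
            nlinarith [mul_nonneg (sq_nonneg a) (sub_nonneg.2 (show u ^ 2 ≤ 1 by nlinarith))]
    have h1mu : (0:ℝ) < 1 - u ^ 2 := by nlinarith
    have hbase : 1 - (φ u) ^ 2 = (1 - a ^ 2) * (1 - u ^ 2) := by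
      rw [hφsq u]; ring
    have habs : |(1 - a ^ 2) * u / φ u| = (1 - a ^ 2) * u / φ u := by
      apply abs_of_nonneg
      positivity
    rw [smul_eq_mul, habs, hf]
    simp only
    rw [hbase, Real.mul_rpow hc.le h1mu.le, Real.rpow_add_one hc.ne' p]
    have hfrac : (1 - a ^ 2) * u / φ u ≤ 1 - a ^ 2 := by
      rw [div_le_iff₀ (hφpos u)]
      nlinarith [hφpos u]
    calc (1 - a ^ 2) * u / φ u * ((1 - a ^ 2) ^ p * (1 - u ^ 2) ^ p)
        ≤ (1 - a ^ 2) * ((1 - a ^ 2) ^ p * (1 - u ^ 2) ^ p) := by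
          apply mul_le_mul_of_nonneg_right hfrac
          positivity
      _ = (1 - a ^ 2) ^ p * (1 - a ^ 2) * (1 - u ^ 2) ^ p := by ring
  calc (∫ t in a..1, f t) = ∫ t in Ioo a 1, f t := by
        rw [integral_of_le ha1.le, integral_Ioc_eq_integral_Ioo]
    _ = ∫ u in Ioo (0:ℝ) 1, |(1 - a ^ 2) * u / φ u| • f (φ u) := by
        rw [← himg, integral_image_eq_integral_abs_deriv_smul measurableSet_Ioo hφ' hinj f]
    _ ≤ ∫ u in Ioo (0:ℝ) 1, (1 - a ^ 2) ^ (p + 1) * (1 - u ^ 2) ^ p :=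
        setIntegral_mono_on hLHSint hRHSint measurableSet_Ioo hpoint
    _ = (1 - a ^ 2) ^ (p + 1) * ∫ u in Ioo (0:ℝ) 1, (1 - u ^ 2) ^ p :=
        MeasureTheory.integral_const_mul _ _
    _ = (1 - a ^ 2) ^ (p + 1) * ∫ t in (0:ℝ)..1, (1 - t ^ 2) ^ p := by
        rw [integral_of_le zero_le_one, integral_Ioc_eq_integral_Ioo]

theorem stmt_13 (n : ℕ) (hn : 2 ≤ n) (α : ℝ) (hα : 0 < α) :
    (if α < Real.sqrt n then
      (∫ t in (α / Real.sqrt n)..1, (1 - t ^ 2) ^ (((n : ℝ) - 3) / 2)) /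
        (2 * ∫ t in (0 : ℝ)..1, (1 - t ^ 2) ^ (((n : ℝ) - 3) / 2))
    else 0) < Real.exp (-0.45 * α ^ 2) := by
  by_cases hcase : α < Real.sqrt n
  · rw [if_pos hcase]
    have hn2 : (2:ℝ) ≤ (n:ℝ) := by exact_mod_cast hn
    have hn0 : (0:ℝ) < (n:ℝ) := by linarith
    have hsq : (0:ℝ) < Real.sqrt n := Real.sqrt_pos.2 hn0
    set a : ℝ := α / Real.sqrt n with ha_def
    set p : ℝ := ((n : ℝ) - 3) / 2 with hp_def
    have hp : -(1/2 : ℝ) ≤ p := by rw [hp_def]; linarith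
    have ha : 0 < a := div_pos hα hsq
    have ha1 : a < 1 := (div_lt_one hsq).2 hcase
    have hc : 0 < 1 - a ^ 2 := by nlinarith
    have hna : (n:ℝ) * a ^ 2 = α ^ 2 := by
      rw [ha_def, div_pow, Real.sq_sqrt hn0.le]
      field_simp
    have hD : 0 < ∫ t in (0:ℝ)..1, (1 - t ^ 2) ^ p := by
      apply intervalIntegral_pos_of_pos_on (aux_integrable13 hp)
      · intro x hx
        apply Real.rpow_pos_of_pos
        nlinarith [hx.1, hx.2]
      · norm_num
    have hkey := aux_key13 hp ha ha1
    have hstep1 : (∫ t in a..1, (1 - t ^ 2) ^ p) / (2 * ∫ t in (0:ℝ)..1, (1 - t ^ 2) ^ p)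
        ≤ (1 - a ^ 2) ^ (p + 1) / 2 := by
      rw [div_le_div_iff₀ (by linarith) (by norm_num)]
      nlinarith [hkey, hD]
    refine lt_of_le_of_lt hstep1 ?_
    -- now prove (1-a^2)^(p+1)/2 < exp(-0.45 α^2)
    rw [Real.rpow_def_of_pos hc, mul_comm (Real.log (1 - a ^ 2)) (p + 1)]
    have hlog : Real.log (1 - a ^ 2) ≤ -(a ^ 2) := by
      have := Real.log_le_sub_one_of_pos hc
      linarith
    have hp1 : (0:ℝ) ≤ p + 1 := by linarith
    have h1 : (p + 1) * Real.log (1 - a ^ 2) ≤ -((p + 1) * a ^ 2) := by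
      nlinarith [mul_le_mul_of_nonneg_left hlog hp1]
    have h2 : Real.exp ((p + 1) * Real.log (1 - a ^ 2)) ≤ Real.exp (-((p + 1) * a ^ 2)) :=
      Real.exp_le_exp.2 h1
    have h3 : Real.exp (-((p + 1) * a ^ 2)) / 2 < Real.exp (-0.45 * α ^ 2) := by
      rw [div_lt_iff₀ (by norm_num : (0:ℝ) < 2), ← Real.exp_log (by norm_num : (0:ℝ) < 2),
        ← Real.exp_add]
      apply Real.exp_lt_exp.2
      have hlog2 : (0.6931471803 : ℝ) < Real.log 2 := Real.log_two_gt_d9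
      have ha2 : a ^ 2 < 1 := by nlinarith
      have hprod : 0 ≤ ((n:ℝ) - 2) * a ^ 2 := mul_nonneg (by linarith) (sq_nonneg a)
      rw [hp_def]
      nlinarith [hna, hprod, sq_nonneg a]
    calc Real.exp ((p + 1) * Real.log (1 - a ^ 2)) / 2
        ≤ Real.exp (-((p + 1) * a ^ 2)) / 2 := by linarith
      _ < Real.exp (-0.45 * α ^ 2) := h3
  · rw [if_neg hcase]
    exact Real.exp_pos _
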